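/- Let r₀, r₁, …, r_h be positive integers with d_j := gcd(r₀,…,r_{j-1}) satisfying d₁ > d₂ > ⋯ > d_{h+1} = 1 and (d_j/d_{j+1}) r_j < r_{j+1} for all 1 ≤ j ≤ h−1 (strict generation). Then the numerical semigroup Γ generated by r₀, …, r_h is symmetric; that is, setting c = −r₀ + 1 + Σ_{j=1}^{h} r_j (d_j/d_{j+1} − 1), for every integer z one has z ∈ Γ if and only if c − 1 − z ∉ Γ. -/

import Mathlib

structure SGData where
  h : ℕ
  r : ℕ → ℕ
  d : ℕ → ℕ
  hpos : ∀ j, j ≤ h → 0 < r j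
  hd : ∀ j, 1 ≤ j → j ≤ h + 1 → d j = (Finset.range j).gcd r
  hdec : ∀ j, 1 ≤ j → j ≤ h → d (j + 1) < d j
  hone : d (h + 1) = 1
  hstrict : ∀ j, 1 ≤ j → j + 1 ≤ h → (d j / d (j + 1)) * r j < r (j + 1)

namespace SGData

variable (D : SGData)

def n (k : ℕ) : ℕ := D.d k / D.d (k + 1)

lemma dpos : ∀ k, 1 ≤ k → k ≤ D.h + 1 → 0 < D.d k := by
  intro k h1 h2
  rw [D.hd k h1 h2]
  rcases Nat.eq_zero_or_pos ((Finset.range k).gcd D.r) with h0 | h0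
  · exfalso
    have := (Finset.gcd_eq_zero_iff).mp h0 0 (Finset.mem_range.mpr h1)
    have := D.hpos 0 (Nat.zero_le _)
    omega
  · exact h0

lemma d_one : D.d 1 = D.r 0 := by
  rw [D.hd 1 le_rfl (by omega)]
  simp [Finset.range_one]

lemma d_succ : ∀ k, 1 ≤ k → k ≤ D.h → D.d (k + 1) = Nat.gcd (D.r k) (D.d k) := by
  intro k h1 h2
  rw [D.hd (k + 1) (by omega) (by omega), D.hd k h1 (by omega), Finset.range_add_one,
    Finset.gcd_insert]
  rfl

lemma d_dvd_r : ∀ k j, j < k → k ≤ D.h + 1 → D.d k ∣ D.r j := by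
  intro k j hj hk
  rw [D.hd k (by omega) hk]
  exact Finset.gcd_dvd (Finset.mem_range.mpr hj)

lemma d_succ_dvd : ∀ k, 1 ≤ k → k ≤ D.h → D.d (k + 1) ∣ D.d k := by
  intro k h1 h2
  rw [D.d_succ k h1 h2]
  exact Nat.gcd_dvd_right _ _

lemma d_succ_dvd_r : ∀ k, 1 ≤ k → k ≤ D.h → D.d (k + 1) ∣ D.r k := by
  intro k h1 h2
  rw [D.d_succ k h1 h2]
  exact Nat.gcd_dvd_left _ _

lemma n_mul : ∀ k, 1 ≤ k → k ≤ D.h → D.n k * D.d (k + 1) = D.d k := by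
  intro k h1 h2
  exact Nat.div_mul_cancel (D.d_succ_dvd k h1 h2)

lemma n_pos : ∀ k, 1 ≤ k → k ≤ D.h → 0 < D.n k := by
  intro k h1 h2
  have h3 := D.dpos k h1 (by omega)
  have h4 := D.dpos (k + 1) (by omega) (by omega)
  have h5 := D.hdec k h1 h2
  exact Nat.div_pos (by omega) h4

lemma coprime : ∀ k, 1 ≤ k → k ≤ D.h →
    Nat.Coprime (D.n k) (D.r k / D.d (k + 1)) := by
  intro k h1 h2
  have hg : D.d (k + 1) = Nat.gcd (D.d k) (D.r k) := by
    rw [D.d_succ k h1 h2, Nat.gcd_comm]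
  have hgp : 0 < Nat.gcd (D.d k) (D.r k) := by
    rw [← hg]; exact D.dpos (k + 1) (by omega) (by omega)
  have := Nat.coprime_div_gcd_div_gcd hgp
  rw [← hg] at this
  exact this

lemma range_split (k : ℕ) (f : ℕ → ℤ) :
    ∑ j ∈ Finset.range (k + 1), f j = f 0 + ∑ j ∈ Finset.Icc 1 k, f j := by
  induction k with
  | zero =>
      rw [Finset.sum_range_one, Finset.Icc_eq_empty (by omega), Finset.sum_empty]
      ring
  | succ k ih =>
      rw [Finset.sum_range_succ, ih, Finset.sum_Icc_succ_top (by omega : 1 ≤ k + 1)]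
      ring

lemma modstep (D : SGData) : ∀ k, 1 ≤ k → k ≤ D.h → ∀ z : ℤ, (D.d (k + 1) : ℤ) ∣ z →
    ∃ a : ℕ, a < D.n k ∧ (D.d k : ℤ) ∣ z - (a : ℤ) * D.r k := by
  intro k h1 h2 z hz
  obtain ⟨w, hw⟩ := hz
  set s : ℕ := D.r k / D.d (k + 1) with hs
  have hrs : (D.r k : ℤ) = (D.d (k + 1) : ℤ) * s := by
    have h : D.d (k + 1) * s = D.r k := Nat.mul_div_cancel' (D.d_succ_dvd_r k h1 h2)
    exact_mod_cast h.symm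
  have hnpos : 0 < D.n k := D.n_pos k h1 h2
  have hcop : IsCoprime (s : ℤ) (D.n k : ℤ) :=
    Nat.isCoprime_iff_coprime.mpr (D.coprime k h1 h2).symm
  obtain ⟨u, v, huv⟩ := hcop
  set N : ℤ := (D.n k : ℤ) with hN
  have hNpos : 0 < N := by rw [hN]; exact_mod_cast hnpos
  set a0 : ℤ := (u * w) % N with ha0
  have ha0nn : 0 ≤ a0 := Int.emod_nonneg _ (by omega)
  have ha0lt : a0 < N := Int.emod_lt_of_pos _ hNpos
  refine ⟨a0.toNat, ?_, ?_⟩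
  · have : (a0.toNat : ℤ) = a0 := Int.toNat_of_nonneg ha0nn
    omega
  · have hkey : N ∣ w - a0 * s := by
      refine ⟨w * v + ((u * w) / N) * s, ?_⟩
      rw [ha0, Int.emod_def]
      linear_combination (-(w : ℤ)) * huv
    obtain ⟨t, ht⟩ := hkey
    refine ⟨t, ?_⟩
    have hdk : (D.d k : ℤ) = N * (D.d (k + 1) : ℤ) := by
      rw [hN]; exact_mod_cast (D.n_mul k h1 h2).symm
    have hcast : (a0.toNat : ℤ) = a0 := Int.toNat_of_nonneg ha0nn
    rw [hcast, hw, hrs, hdk]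
    linear_combination (D.d (k + 1) : ℤ) * ht
lemma exist_std (D : SGData) : ∀ k, k ≤ D.h → ∀ z : ℤ, (D.d (k + 1) : ℤ) ∣ z →
    ∃ (a0 : ℤ) (a : ℕ → ℕ), (∀ j, 1 ≤ j → j ≤ k → a j < D.n j) ∧
      z = a0 * D.r 0 + ∑ j ∈ Finset.Icc 1 k, (a j : ℤ) * D.r j := by
  intro k
  induction k with
  | zero =>
      intro _ z hz
      rw [D.d_one] at hz
      refine ⟨z / D.r 0, fun _ => 0, by omega, ?_⟩
      rw [Finset.Icc_eq_empty (by omega), Finset.sum_empty, add_zero,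
        Int.ediv_mul_cancel hz]
  | succ k ih =>
      intro hk z hz
      obtain ⟨a, halt, hdvd⟩ := D.modstep (k + 1) (by omega) hk z hz
      obtain ⟨a0, b, hb, heq⟩ := ih (by omega) _ hdvd
      refine ⟨a0, fun j => if j = k + 1 then a else b j, ?_, ?_⟩
      · intro j hj1 hj2
        by_cases hcase : j = k + 1
        · simp only [hcase, if_pos rfl]; exact halt
        · simp only [if_neg hcase]; exact hb j hj1 (by omega)
      · rw [Finset.sum_Icc_succ_top (by omega : 1 ≤ k + 1)]
        have hc1 : ((fun j => if j = k + 1 then a else b j) (k + 1)) = a := by simp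
        have hss : ∑ j ∈ Finset.Icc 1 k,
              (((fun j => if j = k + 1 then a else b j) j : ℕ) : ℤ) * D.r j
            = ∑ j ∈ Finset.Icc 1 k, (b j : ℤ) * D.r j := by
          refine Finset.sum_congr rfl ?_
          intro j hj
          have : j ≠ k + 1 := by
            have := Finset.mem_Icc.mp hj; omega
          simp [this]
        rw [hc1, hss]
        linarith [heq]

lemma unique (D : SGData) : ∀ k, k ≤ D.h → ∀ (a0 b0 : ℤ) (a b : ℕ → ℕ),
    (∀ j, 1 ≤ j → j ≤ k → a j < D.n j) → (∀ j, 1 ≤ j → j ≤ k → b j < D.n j) →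
    a0 * D.r 0 + ∑ j ∈ Finset.Icc 1 k, (a j : ℤ) * D.r j
      = b0 * D.r 0 + ∑ j ∈ Finset.Icc 1 k, (b j : ℤ) * D.r j →
    a0 = b0 := by
  intro k
  induction k with
  | zero =>
      intro _ a0 b0 a b _ _ heq
      simp only [Finset.Icc_eq_empty (by omega : ¬(1:ℕ) ≤ 0), Finset.sum_empty, add_zero] at heq
      have hr0 : 0 < D.r 0 := D.hpos 0 (Nat.zero_le _)
      have : (D.r 0 : ℤ) ≠ 0 := by exact_mod_cast hr0.ne'
      exact mul_right_cancel₀ this heq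
  | succ k ih =>
      intro hk a0 b0 a b ha hb heq
      rw [Finset.sum_Icc_succ_top (by omega : 1 ≤ k + 1),
        Finset.sum_Icc_succ_top (by omega : 1 ≤ k + 1)] at heq
      -- top coefficient equality
      have hdvd : (D.d (k + 1) : ℤ) ∣
          ((a (k + 1) : ℤ) - (b (k + 1) : ℤ)) * D.r (k + 1) := by
        have hdr0 : (D.d (k + 1) : ℤ) ∣ (D.r 0 : ℤ) := by
          exact_mod_cast D.d_dvd_r (k + 1) 0 (by omega) (by omega)
        have hsum : ∀ c : ℕ → ℕ, (D.d (k + 1) : ℤ) ∣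
            ∑ j ∈ Finset.Icc 1 k, (c j : ℤ) * D.r j := by
          intro c
          refine Finset.dvd_sum ?_
          intro j hj
          have hj' := Finset.mem_Icc.mp hj
          have : (D.d (k + 1) : ℤ) ∣ (D.r j : ℤ) := by
            exact_mod_cast D.d_dvd_r (k + 1) j (by omega) (by omega)
          exact Dvd.dvd.mul_left this _
        have e : ((a (k + 1) : ℤ) - (b (k + 1) : ℤ)) * D.r (k + 1)
            = (b0 * D.r 0 + ∑ j ∈ Finset.Icc 1 k, (b j : ℤ) * D.r j)
              - (a0 * D.r 0 + ∑ j ∈ Finset.Icc 1 k, (a j : ℤ) * D.r j) := by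
          linarith [heq]
        rw [e]
        exact dvd_sub (dvd_add (hdr0.mul_left _) (hsum b)) (dvd_add (hdr0.mul_left _) (hsum a))
      have htop : a (k + 1) = b (k + 1) := by
        set s : ℕ := D.r (k + 1) / D.d (k + 2) with hs
        have hrs : (D.r (k + 1) : ℤ) = (D.d (k + 2) : ℤ) * s := by
          have h := Nat.mul_div_cancel' (D.d_succ_dvd_r (k + 1) (by omega) hk)
          exact_mod_cast h.symm
        have hdk : (D.d (k + 1) : ℤ) = (D.n (k + 1) : ℤ) * (D.d (k + 2) : ℤ) := by
          exact_mod_cast (D.n_mul (k + 1) (by omega) hk).symm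
        have hd2pos : (0 : ℤ) < D.d (k + 2) := by
          exact_mod_cast D.dpos (k + 2) (by omega) (by omega)
        have hdvd2 : (D.n (k + 1) : ℤ) ∣ ((a (k + 1) : ℤ) - (b (k + 1) : ℤ)) * s := by
          rw [hrs, hdk] at hdvd
          have e2 : ((a (k + 1) : ℤ) - (b (k + 1) : ℤ)) * ((D.d (k + 2) : ℤ) * s)
              = (((a (k + 1) : ℤ) - (b (k + 1) : ℤ)) * s) * (D.d (k + 2) : ℤ) := by ring
          rw [e2] at hdvd
          exact (mul_dvd_mul_iff_right hd2pos.ne').mp hdvd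
        have hcop : IsCoprime ((D.n (k + 1) : ℤ)) (s : ℤ) :=
          Nat.isCoprime_iff_coprime.mpr (D.coprime (k + 1) (by omega) hk)
        have hdvd3 : (D.n (k + 1) : ℤ) ∣ ((a (k + 1) : ℤ) - (b (k + 1) : ℤ)) :=
          hcop.dvd_of_dvd_mul_right hdvd2
        have hdvd4 : D.n (k + 1) ∣ ((a (k + 1) : ℤ) - (b (k + 1) : ℤ)).natAbs :=
          Int.natCast_dvd_natCast.mp (Int.dvd_natAbs.mpr hdvd3)
        have halt := ha (k + 1) (by omega) (by omega)
        have hblt := hb (k + 1) (by omega) (by omega)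
        have habs : ((a (k + 1) : ℤ) - (b (k + 1) : ℤ)).natAbs < D.n (k + 1) := by omega
        have := Nat.eq_zero_of_dvd_of_lt hdvd4 habs
        omega
      apply ih (by omega) a0 b0 a b (fun j h1 h2 => ha j h1 (by omega))
        (fun j h1 h2 => hb j h1 (by omega))
      rw [htop] at heq
      linarith [heq]
lemma frob (D : SGData) : ∀ k, k ≤ D.h → ∀ m : ℤ, (D.d (k + 1) : ℤ) ∣ m →
    (∑ j ∈ Finset.Icc 1 k, ((D.n j : ℤ) - 1) * D.r j) - D.r 0 < m →
    ∃ a : ℕ → ℕ, m = ∑ j ∈ Finset.range (k + 1), (a j : ℤ) * D.r j := by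
  intro k
  induction k with
  | zero =>
      intro _ m hdvd hlt
      rw [D.d_one] at hdvd
      simp only [Finset.Icc_eq_empty (by omega : ¬(1:ℕ) ≤ 0), Finset.sum_empty,
        zero_sub] at hlt
      have hm : 0 ≤ m := by
        rcases hdvd with ⟨t, ht⟩
        have hr0 : (0:ℤ) < D.r 0 := by exact_mod_cast D.hpos 0 (Nat.zero_le _)
        rcases le_or_gt 0 t with h | h
        · rw [ht]; positivity
        · exfalso; nlinarith
      refine ⟨fun _ => (m / D.r 0).toNat, ?_⟩
      rw [Finset.sum_range_one]
      have hr0 : (0:ℤ) < D.r 0 := by exact_mod_cast D.hpos 0 (Nat.zero_le _)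
      have hq : 0 ≤ m / (D.r 0 : ℤ) := Int.ediv_nonneg hm (by omega)
      rw [Int.toNat_of_nonneg hq, Int.ediv_mul_cancel hdvd]
  | succ k ih =>
      intro hk m hdvd hlt
      obtain ⟨a, halt, hdvd2⟩ := D.modstep (k + 1) (by omega) hk m hdvd
      rw [Finset.sum_Icc_succ_top (by omega : 1 ≤ k + 1)] at hlt
      have hrpos : (0:ℤ) ≤ D.r (k + 1) := by positivity
      have hlt2 : (∑ j ∈ Finset.Icc 1 k, ((D.n j : ℤ) - 1) * D.r j) - D.r 0
          < m - (a : ℤ) * D.r (k + 1) := by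
        have halt' : (a : ℤ) + 1 ≤ (D.n (k + 1) : ℤ) := by exact_mod_cast halt
        nlinarith
      obtain ⟨b, hb⟩ := ih (by omega) _ hdvd2 hlt2
      refine ⟨fun j => if j = k + 1 then a else b j, ?_⟩
      rw [Finset.sum_range_succ]
      have hc1 : ((fun j => if j = k + 1 then a else b j) (k + 1)) = a := by simp
      have hss : ∑ j ∈ Finset.range (k + 1),
            (((fun j => if j = k + 1 then a else b j) j : ℕ) : ℤ) * D.r j
          = ∑ j ∈ Finset.range (k + 1), (b j : ℤ) * D.r j := by
        refine Finset.sum_congr rfl ?_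
        intro j hj
        have : j ≠ k + 1 := by have := Finset.mem_range.mp hj; omega
        simp [this]
      rw [hc1, hss]
      linarith [hb]

lemma tele (D : SGData) : ∀ k, k + 1 ≤ D.h →
    ∑ j ∈ Finset.Icc 1 k, ((D.n j : ℤ) - 1) * D.r j ≤ (D.r (k + 1) : ℤ) - D.r 1 := by
  intro k
  induction k with
  | zero =>
      intro _
      simp only [Finset.Icc_eq_empty (by omega : ¬(1:ℕ) ≤ 0), Finset.sum_empty]
      norm_num
  | succ k ih =>
      intro hk
      rw [Finset.sum_Icc_succ_top (by omega : 1 ≤ k + 1)]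
      have h1 := ih (by omega)
      have h2 : (D.n (k + 1) : ℤ) * D.r (k + 1) < D.r (k + 2) := by
        exact_mod_cast D.hstrict (k + 1) (by omega) (by omega)
      have hrpos : (0:ℤ) ≤ D.r (k + 1) := by positivity
      nlinarith

lemma nr_mem (D : SGData) : ∀ k, 1 ≤ k → k ≤ D.h →
    ∃ a : ℕ → ℕ, (D.n k : ℤ) * D.r k = ∑ j ∈ Finset.range k, (a j : ℤ) * D.r j := by
  intro k h1 h2
  obtain ⟨m, rfl⟩ : ∃ m, k = m + 1 := ⟨k - 1, by omega⟩
  apply D.frob m (by omega)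
  · have hd : (D.d (m + 1) : ℤ) = (D.n (m + 1) : ℤ) * (D.d (m + 2) : ℤ) := by
      exact_mod_cast (D.n_mul (m + 1) (by omega) h2).symm
    have hr : (D.d (m + 2) : ℤ) ∣ (D.r (m + 1) : ℤ) := by
      exact_mod_cast D.d_succ_dvd_r (m + 1) (by omega) h2
    rw [hd]
    exact mul_dvd_mul_left _ hr
  · have hr0 : (0:ℤ) < D.r 0 := by exact_mod_cast D.hpos 0 (Nat.zero_le _)
    have hrk : (0:ℤ) < D.r (m + 1) := by exact_mod_cast D.hpos (m + 1) h2
    have hr1 : (0:ℤ) ≤ D.r 1 := by positivity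
    have hn : (1:ℤ) ≤ D.n (m + 1) := by exact_mod_cast D.n_pos (m + 1) (by omega) h2
    have hb := D.tele m h2
    nlinarith [mul_nonneg (by linarith : (0:ℤ) ≤ (D.n (m + 1) : ℤ) - 1) hrk.le]

lemma reduce (D : SGData) : ∀ k, k ≤ D.h → ∀ b : ℕ → ℕ, ∃ a : ℕ → ℕ,
    (∀ j, 1 ≤ j → j ≤ k → a j < D.n j) ∧
    ∑ j ∈ Finset.range (k + 1), (b j : ℤ) * D.r j
      = ∑ j ∈ Finset.range (k + 1), (a j : ℤ) * D.r j := by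
  intro k
  induction k with
  | zero =>
      intro _ b
      exact ⟨b, by omega, rfl⟩
  | succ k ih =>
      intro hk b
      have hnpos : 0 < D.n (k + 1) := D.n_pos (k + 1) (by omega) hk
      obtain ⟨c, hc⟩ := D.nr_mem (k + 1) (by omega) hk
      set q : ℕ := b (k + 1) / D.n (k + 1) with hq
      set s : ℕ := b (k + 1) % D.n (k + 1) with hsdef
      have hslt : s < D.n (k + 1) := Nat.mod_lt _ hnpos
      have hbk : (b (k + 1) : ℤ) = (q : ℤ) * D.n (k + 1) + s := by
        have h0 : D.n (k + 1) * q + s = b (k + 1) := Nat.div_add_mod _ _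
        have h1 : (D.n (k + 1) : ℤ) * q + s = b (k + 1) := by exact_mod_cast h0
        linarith [h1]
      obtain ⟨a', ha'bd, ha'eq⟩ := ih (by omega) (fun j => b j + q * c j)
      refine ⟨Function.update a' (k + 1) s, ?_, ?_⟩
      · intro j hj1 hj2
        by_cases hcase : j = k + 1
        · subst hcase
          rw [Function.update_self]
          exact hslt
        · rw [Function.update_of_ne hcase]
          exact ha'bd j hj1 (by omega)
      · have hL : ∑ j ∈ Finset.range (k + 1 + 1), (b j : ℤ) * D.r j
            = ∑ j ∈ Finset.range (k + 1), (b j : ℤ) * D.r j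
              + (b (k + 1) : ℤ) * D.r (k + 1) := Finset.sum_range_succ _ _
        have hR : ∑ j ∈ Finset.range (k + 1 + 1),
              ((Function.update a' (k + 1) s j : ℕ) : ℤ) * D.r j
            = ∑ j ∈ Finset.range (k + 1),
                ((Function.update a' (k + 1) s j : ℕ) : ℤ) * D.r j
              + ((Function.update a' (k + 1) s (k + 1) : ℕ) : ℤ) * D.r (k + 1) :=
          Finset.sum_range_succ _ _
        have hss : ∑ j ∈ Finset.range (k + 1),
              ((Function.update a' (k + 1) s j : ℕ) : ℤ) * D.r j
            = ∑ j ∈ Finset.range (k + 1), (a' j : ℤ) * D.r j := by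
          refine Finset.sum_congr rfl ?_
          intro j hj
          have hne : j ≠ k + 1 := by have := Finset.mem_range.mp hj; omega
          rw [Function.update_of_ne hne]
        rw [hL, hR, hss, Function.update_self]
        have hcomb : ∑ j ∈ Finset.range (k + 1), ((b j + q * c j : ℕ) : ℤ) * D.r j
            = ∑ j ∈ Finset.range (k + 1), (b j : ℤ) * D.r j
              + (q : ℤ) * ∑ j ∈ Finset.range (k + 1), (c j : ℤ) * D.r j := by
          rw [Finset.mul_sum, ← Finset.sum_add_distrib]
          refine Finset.sum_congr rfl ?_
          intro j _
          push_cast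
          ring
        rw [hcomb] at ha'eq
        have hsplit : (b (k + 1) : ℤ) * D.r (k + 1)
            = (q : ℤ) * ((D.n (k + 1) : ℤ) * D.r (k + 1)) + (s : ℤ) * D.r (k + 1) := by
          rw [hbk]; ring
        rw [hsplit, hc]
        linarith [ha'eq]
lemma complement (D : SGData) (A : ℤ) (a : ℕ → ℕ)
    (ha : ∀ j, 1 ≤ j → j ≤ D.h → a j < D.n j) :
    (-(D.r 0 : ℤ) + 1 + ∑ j ∈ Finset.Icc 1 D.h, (D.r j : ℤ) * ((D.n j : ℤ) - 1)) - 1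
      - (A * D.r 0 + ∑ j ∈ Finset.Icc 1 D.h, (a j : ℤ) * D.r j)
    = (-1 - A) * D.r 0
      + ∑ j ∈ Finset.Icc 1 D.h, ((D.n j - 1 - a j : ℕ) : ℤ) * D.r j := by
  have hcong : ∑ j ∈ Finset.Icc 1 D.h, ((D.n j - 1 - a j : ℕ) : ℤ) * D.r j
      = ∑ j ∈ Finset.Icc 1 D.h,
          ((D.r j : ℤ) * ((D.n j : ℤ) - 1) - (a j : ℤ) * D.r j) := by
    refine Finset.sum_congr rfl ?_
    intro j hj
    have hj' := Finset.mem_Icc.mp hj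
    have hlt := ha j hj'.1 hj'.2
    have hcast : ((D.n j - 1 - a j : ℕ) : ℤ) = (D.n j : ℤ) - 1 - a j := by omega
    rw [hcast]; ring
  rw [hcong, Finset.sum_sub_distrib]
  ring
end SGData
/-- Let `r₀, …, r_h` be positive integers whose divisor sequence
`d j = gcd(r₀,…,r_{j-1})` satisfies `d 1 > d 2 > ⋯ > d (h+1) = 1` and the
strict-generation condition `(d j / d (j+1)) * r j < r (j+1)` for
`1 ≤ j ≤ h − 1`.  Then the numerical semigroup `Γ` generated by `r₀, …, r_h`
is symmetric: with `c = −r₀ + 1 + Σ_{j=1}^{h} r_j (d_j/d_{j+1} − 1)`, for every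
integer `z` one has `z ∈ Γ ↔ c − 1 − z ∉ Γ`. -/
theorem strictly_generated_semigroup_symmetric (h : ℕ) (r d : ℕ → ℕ)
    (hpos : ∀ j, j ≤ h → 0 < r j)
    (hd : ∀ j, 1 ≤ j → j ≤ h + 1 → d j = (Finset.range j).gcd r)
    (hdec : ∀ j, 1 ≤ j → j ≤ h → d (j + 1) < d j)
    (hone : d (h + 1) = 1)
    (hstrict : ∀ j, 1 ≤ j → j + 1 ≤ h → (d j / d (j + 1)) * r j < r (j + 1)) :
    ∀ z : ℤ,
      (∃ a : ℕ → ℕ, z = ∑ j ∈ Finset.range (h + 1), (a j : ℤ) * (r j : ℤ)) ↔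
      ¬ (∃ a : ℕ → ℕ,
          (-(r 0 : ℤ) + 1 +
              ∑ j ∈ Finset.Icc 1 h, (r j : ℤ) * ((d j / d (j + 1) : ℕ) - 1 : ℤ))
            - 1 - z
          = ∑ j ∈ Finset.range (h + 1), (a j : ℤ) * (r j : ℤ)) := by
  intro z
  let D : SGData := ⟨h, r, d, hpos, hd, hdec, hone, hstrict⟩
  constructor
  · rintro ⟨b, hb⟩ ⟨b', hb'⟩
    obtain ⟨a, habd, haeq⟩ := D.reduce h le_rfl b
    have habd' : ∀ j, 1 ≤ j → j ≤ h → a j < d j / d (j + 1) := habd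
    have haeq' : ∑ j ∈ Finset.range (h + 1), (b j : ℤ) * (r j : ℤ)
        = ∑ j ∈ Finset.range (h + 1), (a j : ℤ) * (r j : ℤ) := haeq
    obtain ⟨a2, ha2bd, ha2eq⟩ := D.reduce h le_rfl b'
    have ha2eq' : ∑ j ∈ Finset.range (h + 1), (b' j : ℤ) * (r j : ℤ)
        = ∑ j ∈ Finset.range (h + 1), (a2 j : ℤ) * (r j : ℤ) := ha2eq
    have hsplit1 : ∑ j ∈ Finset.range (h + 1), (a j : ℤ) * (r j : ℤ)
        = (a 0 : ℤ) * (r 0 : ℤ) + ∑ j ∈ Finset.Icc 1 h, (a j : ℤ) * (r j : ℤ) :=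
      SGData.range_split h _
    have hsplit2 : ∑ j ∈ Finset.range (h + 1), (a2 j : ℤ) * (r j : ℤ)
        = (a2 0 : ℤ) * (r 0 : ℤ) + ∑ j ∈ Finset.Icc 1 h, (a2 j : ℤ) * (r j : ℤ) :=
      SGData.range_split h _
    have hz2 : z = (a 0 : ℤ) * (r 0 : ℤ)
        + ∑ j ∈ Finset.Icc 1 h, (a j : ℤ) * (r j : ℤ) := by
      rw [hb, haeq', hsplit1]
    have hC2 : (-(r 0 : ℤ) + 1 +
            ∑ j ∈ Finset.Icc 1 h, (r j : ℤ) * ((d j / d (j + 1) : ℕ) - 1 : ℤ)) - 1 - z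
        = (a2 0 : ℤ) * (r 0 : ℤ)
          + ∑ j ∈ Finset.Icc 1 h, (a2 j : ℤ) * (r j : ℤ) := by
      rw [hb', ha2eq', hsplit2]
    have hC3 : (-(r 0 : ℤ) + 1 +
            ∑ j ∈ Finset.Icc 1 h, (r j : ℤ) * ((d j / d (j + 1) : ℕ) - 1 : ℤ)) - 1 - z
        = (-1 - (a 0 : ℤ)) * (r 0 : ℤ)
          + ∑ j ∈ Finset.Icc 1 h,
              ((d j / d (j + 1) - 1 - a j : ℕ) : ℤ) * (r j : ℤ) := by
      rw [hz2]
      exact D.complement (a 0) a habd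
    have ha3bd : ∀ j, 1 ≤ j → j ≤ h →
        d j / d (j + 1) - 1 - a j < d j / d (j + 1) := by
      intro j h1 h2
      have h3 := habd' j h1 h2
      have h4 : 0 < d j / d (j + 1) := D.n_pos j h1 h2
      omega
    have hu : (a2 0 : ℤ) = -1 - (a 0 : ℤ) :=
      D.unique h le_rfl (a2 0) (-1 - (a 0 : ℤ)) a2
        (fun j => d j / d (j + 1) - 1 - a j) ha2bd ha3bd (hC2.symm.trans hC3)
    omega
  · intro hn
    obtain ⟨a0, a, habd, haeq⟩ := D.exist_std h le_rfl z
      (by show ((d (h + 1) : ℕ) : ℤ) ∣ z; rw [hone]; simp)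
    have habd' : ∀ j, 1 ≤ j → j ≤ h → a j < d j / d (j + 1) := habd
    have haeq' : z = a0 * (r 0 : ℤ)
        + ∑ j ∈ Finset.Icc 1 h, (a j : ℤ) * (r j : ℤ) := haeq
    by_cases ha0 : 0 ≤ a0
    · set cf : ℕ → ℕ := fun j => if j = 0 then a0.toNat else a j with hcf
      refine ⟨cf, ?_⟩
      have e1 : ∑ j ∈ Finset.range (h + 1), (cf j : ℤ) * (r j : ℤ)
          = (cf 0 : ℤ) * (r 0 : ℤ)
            + ∑ j ∈ Finset.Icc 1 h, (cf j : ℤ) * (r j : ℤ) :=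
        SGData.range_split h _
      have e2 : ((cf 0 : ℕ) : ℤ) = a0 := by
        simp [hcf, Int.toNat_of_nonneg ha0]
      have e3 : ∑ j ∈ Finset.Icc 1 h, (cf j : ℤ) * (r j : ℤ)
          = ∑ j ∈ Finset.Icc 1 h, (a j : ℤ) * (r j : ℤ) := by
        refine Finset.sum_congr rfl ?_
        intro j hj
        have hne : j ≠ 0 := by have := (Finset.mem_Icc.mp hj).1; omega
        simp [hcf, hne]
      rw [e1, e2, e3]
      exact haeq'
    · exfalso
      apply hn
      push_neg at ha0
      have ha0' : (0 : ℤ) ≤ -1 - a0 := by omega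
      set cf : ℕ → ℕ := fun j =>
        if j = 0 then (-1 - a0).toNat else d j / d (j + 1) - 1 - a j with hcf
      refine ⟨cf, ?_⟩
      have e1 : ∑ j ∈ Finset.range (h + 1), (cf j : ℤ) * (r j : ℤ)
          = (cf 0 : ℤ) * (r 0 : ℤ)
            + ∑ j ∈ Finset.Icc 1 h, (cf j : ℤ) * (r j : ℤ) :=
        SGData.range_split h _
      have e2 : ((cf 0 : ℕ) : ℤ) = -1 - a0 := by
        simp [hcf, Int.toNat_of_nonneg ha0']
      have e3 : ∑ j ∈ Finset.Icc 1 h, (cf j : ℤ) * (r j : ℤ)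
          = ∑ j ∈ Finset.Icc 1 h,
              ((d j / d (j + 1) - 1 - a j : ℕ) : ℤ) * (r j : ℤ) := by
        refine Finset.sum_congr rfl ?_
        intro j hj
        have hne : j ≠ 0 := by have := (Finset.mem_Icc.mp hj).1; omega
        simp [hcf, hne]
      rw [e1, e2, e3, haeq']
      exact D.complement a0 a habd
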